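/- Descent-lemma corollary with inexact gradients: let f be l-smooth on a convex set C, let x \in C and x^+ = \mathrm{Proj}_C(x - \beta g) for some vector g. Then f(x^+) - f(x) \le (3l/4 - 1/\beta)\|x - x^+\|_2^2 + (1/l)\|\nabla f(x) - g\|_2^2. -/

import Mathlib

open RealInnerProductSpace

/-- Descent lemma for `l`-smooth functions on a convex set. -/
lemma descent_lemma_aux {n : ℕ}
    (f : EuclideanSpace ℝ (Fin n) → ℝ) (C : Set (EuclideanSpace ℝ (Fin n)))
    (l : ℝ) (hl : 0 < l) (hCconv : Convex ℝ C)
    (hdiff : ∀ x ∈ C, DifferentiableAt ℝ f x)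
    (hsmooth : ∀ x ∈ C, ∀ y ∈ C, ‖gradient f x - gradient f y‖ ≤ l * ‖x - y‖)
    (x y : EuclideanSpace ℝ (Fin n)) (hx : x ∈ C) (hy : y ∈ C) :
    f y ≤ f x + ⟪gradient f x, y - x⟫ + l / 2 * ‖y - x‖ ^ 2 := by
  set d := y - x with hd
  set p : ℝ → EuclideanSpace ℝ (Fin n) := fun t => x + t • d with hp
  have hpmem : ∀ t ∈ Set.Icc (0:ℝ) 1, p t ∈ C := by
    intro t ht
    have : p t = (1 - t) • x + t • y := by
      simp only [hp, hd]
      module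
    rw [this]
    exact hCconv hx hy (by linarith [ht.1, ht.2]) ht.1 (by linarith [ht.1, ht.2])
  have hderivp : ∀ t : ℝ, HasDerivAt p d t := by
    intro t
    have h := ((hasDerivAt_id t).smul_const d).const_add x
    rw [one_smul] at h
    exact h
  have hderivφ : ∀ t ∈ Set.Icc (0:ℝ) 1,
      HasDerivAt (fun t => f (p t)) ⟪gradient f (p t), d⟫ t := by
    intro t ht
    have hgrad := (hdiff (p t) (hpmem t ht)).hasGradientAt
    have hfd : HasFDerivAt f (InnerProductSpace.toDual ℝ _ (gradient f (p t))) (p t) :=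
      hasGradientAt_iff_hasFDerivAt.mp hgrad
    have := hfd.comp_hasDerivAt t (hderivp t)
    exact this
  -- δ t = ψ t - φ t, show monotone on [0,1]
  set δ : ℝ → ℝ := fun t => f x + t * ⟪gradient f x, d⟫ + l / 2 * t ^ 2 * ‖d‖ ^ 2
      - f (p t) with hδ
  have hδderiv : ∀ t ∈ Set.Icc (0:ℝ) 1,
      HasDerivAt δ (⟪gradient f x, d⟫ + l * t * ‖d‖ ^ 2 - ⟪gradient f (p t), d⟫) t := by
    intro t ht
    have h1 : HasDerivAt (fun t : ℝ => f x + t * ⟪gradient f x, d⟫ + l / 2 * t ^ 2 * ‖d‖ ^ 2)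
        (⟪gradient f x, d⟫ + l * t * ‖d‖ ^ 2) t := by
      have := (((hasDerivAt_id t).mul_const ⟪gradient f x, d⟫).const_add (f x)).add
        (((hasDerivAt_pow 2 t).const_mul (l / 2)).mul_const (‖d‖ ^ 2))
      refine this.congr_deriv ?_
      push_cast
      ring
    exact h1.sub (hderivφ t ht)
  have hmono : MonotoneOn δ (Set.Icc (0:ℝ) 1) := by
    apply monotoneOn_of_deriv_nonneg (convex_Icc 0 1)
    · exact ContinuousOn.congr (fun t ht => (hδderiv t ht).continuousAt.continuousWithinAt)
        (fun t ht => rfl) |>.mono (le_refl _) |>.mono (le_refl _)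
    · intro t ht
      rw [interior_Icc] at ht
      exact (hδderiv t (Set.mem_Icc_of_Ioo ht)).differentiableAt.differentiableWithinAt
    · intro t ht
      rw [interior_Icc] at ht
      rw [(hδderiv t (Set.mem_Icc_of_Ioo ht)).deriv]
      have hlip := hsmooth (p t) (hpmem t (Set.mem_Icc_of_Ioo ht)) x hx
      have hpt : ‖p t - x‖ = t * ‖d‖ := by
        have : p t - x = t • d := by simp [hp]
        rw [this, norm_smul, Real.norm_eq_abs, abs_of_pos ht.1]
      rw [hpt] at hlip
      have hinner : ⟪gradient f (p t) - gradient f x, d⟫ ≤ l * (t * ‖d‖) * ‖d‖ := by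
        calc ⟪gradient f (p t) - gradient f x, d⟫
            ≤ ‖gradient f (p t) - gradient f x‖ * ‖d‖ := real_inner_le_norm _ _
          _ ≤ l * (t * ‖d‖) * ‖d‖ := by
              apply mul_le_mul_of_nonneg_right hlip (norm_nonneg _)
      rw [inner_sub_left] at hinner
      nlinarith [hinner]
  have h01 : δ 0 ≤ δ 1 := hmono (Set.mem_Icc.mpr ⟨le_refl 0, zero_le_one⟩)
    (Set.mem_Icc.mpr ⟨zero_le_one, le_refl 1⟩) zero_le_one
  have hp0 : p 0 = x := by simp [hp]
  have hp1 : p 1 = y := by simp [hp, hd]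
  simp only [hδ, hp0, hp1] at h01
  push_cast at h01
  nlinarith [h01]

theorem descent_with_inexact_gradient {n : ℕ}
    (f : EuclideanSpace ℝ (Fin n) → ℝ) (C : Set (EuclideanSpace ℝ (Fin n)))
    (l β : ℝ) (hl : 0 < l) (hβ : 0 < β)
    (hCconv : Convex ℝ C) (hCclosed : IsClosed C)
    (hdiff : ∀ x ∈ C, DifferentiableAt ℝ f x)
    (hsmooth : ∀ x ∈ C, ∀ y ∈ C, ‖gradient f x - gradient f y‖ ≤ l * ‖x - y‖)
    (x g xplus : EuclideanSpace ℝ (Fin n)) (hx : x ∈ C)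
    (hmem : xplus ∈ C)
    -- `xplus` is the Euclidean projection of `x - β • g` onto `C`
    (hproj : ∀ y ∈ C, ‖x - β • g - xplus‖ ≤ ‖x - β • g - y‖) :
    f xplus - f x ≤ (3 * l / 4 - 1 / β) * ‖x - xplus‖ ^ 2
      + (1 / l) * ‖gradient f x - g‖ ^ 2 := by
  have hdescent := descent_lemma_aux f C l hl hCconv hdiff hsmooth x xplus hx hmem
  -- projection inequality
  haveI : Nonempty C := ⟨⟨xplus, hmem⟩⟩
  have hinf : ‖(x - β • g) - xplus‖ = ⨅ w : C, ‖(x - β • g) - w‖ := by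
    apply le_antisymm
    · exact le_ciInf fun w => hproj w w.2
    · exact ciInf_le ⟨0, fun _ ⟨w, hw⟩ => hw ▸ norm_nonneg _⟩ (⟨xplus, hmem⟩ : C)
  have hchar := (norm_eq_iInf_iff_real_inner_le_zero hCconv hmem).mp hinf x hx
  -- ⟪x - β g - xplus, x - xplus⟫ ≤ 0
  have hexp : ⟪x - xplus, x - xplus⟫ - β * ⟪g, x - xplus⟫ ≤ 0 := by
    have : x - β • g - xplus = (x - xplus) - β • g := by module
    rw [this, inner_sub_left, inner_smul_left] at hchar
    simpa using hchar
  have hnorm : ⟪x - xplus, x - xplus⟫ = ‖x - xplus‖ ^ 2 := real_inner_self_eq_norm_sq _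
  have hg : ⟪g, xplus - x⟫ ≤ -(1 / β) * ‖x - xplus‖ ^ 2 := by
    have h2 : ⟪g, xplus - x⟫ = -⟪g, x - xplus⟫ := by
      rw [← inner_neg_right]; congr 1; module
    rw [h2]
    rw [hnorm] at hexp
    have := (div_le_iff₀ hβ).mpr (by linarith : ‖x - xplus‖ ^ 2 ≤ ⟪g, x - xplus⟫ * β)
    have h3 : (1 / β) * ‖x - xplus‖ ^ 2 = ‖x - xplus‖ ^ 2 / β := by ring
    linarith [this]
  -- split inner product
  have hsplit : ⟪gradient f x, xplus - x⟫
      = ⟪gradient f x - g, xplus - x⟫ + ⟪g, xplus - x⟫ := by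
    rw [← inner_add_left]; congr 1; module
  have hcs : ⟪gradient f x - g, xplus - x⟫ ≤ ‖gradient f x - g‖ * ‖xplus - x‖ :=
    real_inner_le_norm _ _
  have hyoung : ‖gradient f x - g‖ * ‖xplus - x‖
      ≤ (1 / l) * ‖gradient f x - g‖ ^ 2 + (l / 4) * ‖xplus - x‖ ^ 2 := by
    have key : (1 / l) * ‖gradient f x - g‖ ^ 2 + (l / 4) * ‖xplus - x‖ ^ 2
        - ‖gradient f x - g‖ * ‖xplus - x‖
        = (1 / l) * (‖gradient f x - g‖ - l / 2 * ‖xplus - x‖) ^ 2 := by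
      field_simp
      ring
    have hpos : (0:ℝ) ≤ 1 / l := by positivity
    linarith [mul_nonneg hpos (sq_nonneg (‖gradient f x - g‖ - l / 2 * ‖xplus - x‖)), key]
  have hnormsymm : ‖xplus - x‖ = ‖x - xplus‖ := by
    rw [← norm_neg]; congr 1; module
  rw [hnormsymm] at hyoung hdescent hcs
  linarith [hdescent, hsplit, hcs, hyoung, hg]
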